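/- Let G be a finite group and H a subgroup of G. Then H is a perfect code of G if and only if H is a perfect code of every subgroup K of G with H ≤ K ≤ G (i.e., H is a perfect code of G if and only if for all subgroups K containing H, H is a perfect code of K). -/
import Mathlib


/-- A subgroup `H` of a group `G` is a *perfect code* of `G` if `H` admits an
inverse-closed left transversal in `G`, i.e. there is a set `T ⊆ G` with
`T⁻¹ = T` such that every element of `G` lies in exactly one left coset `tH`, `t ∈ T`. -/
def IsPerfectCode {G : Type*} [Group G] (H : Subgroup G) : Prop :=
  ∃ T : Set G, T⁻¹ = T ∧ ∀ g : G, ∃! t : G, t ∈ T ∧ t⁻¹ * g ∈ H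

theorem perfectCode_iff_forall_intermediate {G : Type*} [Group G] [Finite G]
    (H : Subgroup G) :
    IsPerfectCode H ↔ ∀ K : Subgroup G, H ≤ K → IsPerfectCode (H.subgroupOf K) := by
  constructor
  · rintro ⟨T, hinv, hT⟩ K hHK
    refine ⟨{k : K | (k : G) ∈ T}, ?_, ?_⟩
    · ext k
      conv_rhs => rw [Set.mem_setOf_eq, ← hinv]
      simp
    · intro k
      obtain ⟨t, ⟨htT, htH⟩, huniq⟩ := hT (k : G)
      have htK : t ∈ K := by
        have : t = (k : G) * (t⁻¹ * (k : G))⁻¹ := by group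
        rw [this]
        exact K.mul_mem k.2 (K.inv_mem (hHK htH))
      refine ⟨⟨t, htK⟩, ⟨htT, ?_⟩, ?_⟩
      · simpa [Subgroup.mem_subgroupOf] using htH
      · rintro ⟨s, hsK⟩ ⟨hsT, hsH⟩
        have : s = t := huniq s ⟨hsT, by simpa [Subgroup.mem_subgroupOf] using hsH⟩
        exact Subtype.ext this
  · intro h
    obtain ⟨T, hinv, hT⟩ := h ⊤ le_top
    refine ⟨{g : G | (⟨g, trivial⟩ : (⊤ : Subgroup G)) ∈ T}, ?_, ?_⟩
    · ext g
      conv_rhs => rw [Set.mem_setOf_eq, ← hinv]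
      simp only [Set.mem_inv]
      rfl
    · intro g
      obtain ⟨t, ⟨htT, htH⟩, huniq⟩ := hT ⟨g, trivial⟩
      refine ⟨(t : G), ⟨?_, ?_⟩, ?_⟩
      · simpa using htT
      · simpa [Subgroup.mem_subgroupOf] using htH
      · intro s ⟨hsT, hsH⟩
        have : (⟨s, trivial⟩ : (⊤ : Subgroup G)) = t :=
          huniq ⟨s, trivial⟩ ⟨hsT, by simpa [Subgroup.mem_subgroupOf] using hsH⟩
        exact congrArg Subtype.val this
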